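/- For every positive integer n, the Euler number E_{2n} equals the (2n)-th derivative at z = 0 of the function z -> sum over k from 1 to n of (1 - cosh z)^k. -/

import Mathlib

open Finset ContDiff

private theorem my_iteratedDeriv_add {f g : ℝ → ℝ} (hf : ContDiff ℝ ∞ f) (hg : ContDiff ℝ ∞ g)
    (n : ℕ) :
    iteratedDeriv n (fun z => f z + g z) = fun x => iteratedDeriv n f x + iteratedDeriv n g x := by
  funext x
  rw [← iteratedDerivWithin_univ, ← iteratedDerivWithin_univ, ← iteratedDerivWithin_univ]
  exact iteratedDerivWithin_add (Set.mem_univ x) uniqueDiffOn_univ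
    (hf.contDiffWithinAt.of_le (by exact_mod_cast le_top)) (hg.contDiffWithinAt.of_le (by exact_mod_cast le_top))

private theorem pascal_sum (a b : ℕ → ℝ) (n : ℕ) :
    (∑ i ∈ range (n+1), (n.choose i : ℝ) * a (i+1) * b (n-i)) +
    (∑ i ∈ range (n+1), (n.choose i : ℝ) * a i * b (n-i+1)) =
    ∑ i ∈ range (n+1+1), ((n+1).choose i : ℝ) * a i * b (n+1-i) := by
  rw [Finset.sum_range_succ' (fun i => ((n+1).choose i : ℝ) * a i * b (n+1-i))]
  rw [Finset.sum_range_succ' (fun i => (n.choose i : ℝ) * a i * b (n-i+1))]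
  have h1 : ∑ i ∈ range n, (n.choose (i+1) : ℝ) * a (i+1) * b (n-(i+1)+1)
      = ∑ i ∈ range (n+1), (n.choose (i+1) : ℝ) * a (i+1) * b (n-i) := by
    rw [Finset.sum_range_succ, Nat.choose_succ_self]
    simp only [Nat.cast_zero, zero_mul, add_zero]
    apply Finset.sum_congr rfl
    intro i hi
    have hi' : i < n := Finset.mem_range.mp hi
    congr 2
    omega
  rw [h1]
  have h2 : ∀ i ∈ range (n+1),
      ((n+1).choose (i+1) : ℝ) * a (i+1) * b (n+1-(i+1))
      = (n.choose i : ℝ) * a (i+1) * b (n-i) + (n.choose (i+1) : ℝ) * a (i+1) * b (n-i) := by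
    intro i _
    have : n + 1 - (i+1) = n - i := by omega
    rw [this, Nat.choose_succ_succ]
    push_cast
    ring
  rw [Finset.sum_congr rfl h2, Finset.sum_add_distrib]
  simp only [Nat.choose_zero_right, Nat.cast_one, one_mul, Nat.sub_zero]
  ring

private theorem my_leibniz {f g : ℝ → ℝ} (hf : ContDiff ℝ ∞ f) (hg : ContDiff ℝ ∞ g) (n : ℕ) :
    iteratedDeriv n (fun z => f z * g z) = fun x =>
      ∑ i ∈ range (n + 1), (n.choose i : ℝ) * iteratedDeriv i f x * iteratedDeriv (n - i) g x := by
  induction n generalizing f g with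
  | zero => simp [iteratedDeriv_zero]
  | succ n ih =>
    have hdf : Differentiable ℝ f := (contDiff_infty_iff_deriv.mp hf).1
    have hdg : Differentiable ℝ g := (contDiff_infty_iff_deriv.mp hg).1
    rw [iteratedDeriv_succ']
    have hder : deriv (fun z => f z * g z) = fun z => deriv f z * g z + f z * deriv g z := by
      funext z; exact deriv_mul (hdf z) (hdg z)
    rw [hder]
    have hdf' : ContDiff ℝ ∞ (deriv f) := (contDiff_infty_iff_deriv.mp hf).2
    have hdg' : ContDiff ℝ ∞ (deriv g) := (contDiff_infty_iff_deriv.mp hg).2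
    rw [my_iteratedDeriv_add (hdf'.mul hg) (hf.mul hdg')]
    rw [ih hdf' hg, ih hf hdg']
    funext x
    have e1 : ∀ i, iteratedDeriv i (deriv f) x = iteratedDeriv (i+1) f x := fun i => by
      rw [iteratedDeriv_succ']
    have e2 : ∀ i, iteratedDeriv i (deriv g) x = iteratedDeriv (i+1) g x := fun i => by
      rw [iteratedDeriv_succ']
    simp only [e1, e2]
    exact pascal_sum (fun i => iteratedDeriv i f x) (fun i => iteratedDeriv i g x) n

private theorem cosh_smooth : ContDiff ℝ ∞ Real.cosh := Real.contDiff_cosh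

private theorem pow_smooth (m : ℕ) : ContDiff ℝ ∞ (fun z : ℝ => (1 - Real.cosh z) ^ m) :=
  (contDiff_const.sub cosh_smooth).pow m

private theorem inv_cosh_smooth : ContDiff ℝ ∞ (fun z : ℝ => 1 / Real.cosh z) :=
  contDiff_const.div cosh_smooth fun z => (Real.cosh_pos z).ne'

/-- All derivatives of `(1 - cosh)^m` of order `< 2m` vanish at `0`. -/
private theorem pow_deriv_zero (m : ℕ) : ∀ j, j < 2 * m →
    iteratedDeriv j (fun z : ℝ => (1 - Real.cosh z) ^ m) 0 = 0 := by
  induction m with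
  | zero => intro j hj; omega
  | succ m ih =>
    intro j hj
    have hsplit : (fun z : ℝ => (1 - Real.cosh z) ^ (m+1))
        = fun z => (1 - Real.cosh z) * (1 - Real.cosh z) ^ m := by
      funext z; ring
    rw [hsplit, my_leibniz (contDiff_const.sub cosh_smooth) (pow_smooth m)]
    apply Finset.sum_eq_zero
    intro i hi
    have hi' : i ≤ j := by simpa using Nat.lt_succ_iff.mp (Finset.mem_range.mp hi)
    by_cases h : j - i < 2 * m
    · rw [ih _ h]; ring
    · have hi2 : i ≤ 1 := by omega
      interval_cases i
      · have : iteratedDeriv 0 (fun z : ℝ => 1 - Real.cosh z) 0 = 0 := by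
          simp [iteratedDeriv_zero]
        rw [this]; ring
      · have : iteratedDeriv 1 (fun z : ℝ => 1 - Real.cosh z) 0 = 0 := by
          rw [iteratedDeriv_one]
          have : deriv (fun z : ℝ => 1 - Real.cosh z) 0 = -Real.sinh 0 := by
            rw [deriv_const_sub]
            simp [Real.deriv_cosh]
          simp [this]
        rw [this]; ring

/-- The Euler numbers, defined via the generating function `1 / cosh t = ∑ Eₙ tⁿ / n!`,
i.e. as derivatives of `1 / cosh` at `0`. -/
noncomputable def eulerNumber (n : ℕ) : ℝ :=
  iteratedDeriv n (fun t : ℝ => 1 / Real.cosh t) 0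

theorem euler_eq_iteratedDeriv (n : ℕ) (hn : 0 < n) :
    eulerNumber (2 * n) =
      iteratedDeriv (2 * n)
        (fun z : ℝ => ∑ k ∈ Finset.Icc 1 n, (1 - Real.cosh z) ^ k) 0 := by
  -- key identity: ∑_{k=1}^n r^k = 1/cosh - (1-cosh)^{n+1}/cosh - 1 with r = 1 - cosh
  have hfun : (fun z : ℝ => ∑ k ∈ Finset.Icc 1 n, (1 - Real.cosh z) ^ k)
      = fun z => (1 / Real.cosh z + (-((1 - Real.cosh z) ^ (n+1)) * (1 / Real.cosh z))) + (-1) := by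
    funext z
    have hc : Real.cosh z ≠ 0 := (Real.cosh_pos z).ne'
    have hr : ∑ k ∈ Finset.Icc 1 n, (1 - Real.cosh z) ^ k
        = (∑ k ∈ Finset.range (n+1), (1 - Real.cosh z) ^ k) - 1 := by
      rw [show Finset.Icc 1 n = Finset.Ico 1 (n+1) from rfl,
        Finset.sum_Ico_eq_sum_range, Finset.sum_range_succ']
      simp [add_comm]
    rw [hr]
    have hgeo := geom_sum_mul (1 - Real.cosh z) (n+1)
    -- (∑ i ∈ range (n+1), (1-cosh)^i) * ((1-cosh) - 1) = (1-cosh)^{n+1} - 1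
    field_simp
    nlinarith [hgeo]
  rw [hfun]
  have h1 : ContDiff ℝ ∞ (fun z : ℝ => 1 / Real.cosh z + (-((1 - Real.cosh z) ^ (n+1)) * (1 / Real.cosh z))) :=
    inv_cosh_smooth.add (((pow_smooth (n+1)).neg).mul inv_cosh_smooth)
  have hadd := my_iteratedDeriv_add h1 (contDiff_const (c := (-1 : ℝ))) (2 * n)
  have : (fun z : ℝ => (1 / Real.cosh z + (-((1 - Real.cosh z) ^ (n+1)) * (1 / Real.cosh z))) + (-1))
      = fun z => (fun z : ℝ => 1 / Real.cosh z + (-((1 - Real.cosh z) ^ (n+1)) * (1 / Real.cosh z))) z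
        + (fun _ : ℝ => (-1 : ℝ)) z := rfl
  rw [this, hadd]
  have hzero : ∀ k : ℕ, iteratedDeriv k (fun _ : ℝ => (0 : ℝ)) = fun _ => 0 := by
    intro k
    induction k with
    | zero => funext x; simp [iteratedDeriv_zero]
    | succ k ihk => rw [iteratedDeriv_succ', deriv_const']; exact ihk
  have hconst : iteratedDeriv (2 * n) (fun _ : ℝ => (-1 : ℝ)) 0 = 0 := by
    obtain ⟨m, hm⟩ : ∃ m, 2 * n = m + 1 := ⟨2 * n - 1, by omega⟩
    rw [hm, iteratedDeriv_succ', deriv_const', hzero m]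
  have hadd2 := my_iteratedDeriv_add inv_cosh_smooth
    (((pow_smooth (n+1)).neg).mul inv_cosh_smooth) (2 * n)
  rw [show (fun z : ℝ => 1 / Real.cosh z + (-((1 - Real.cosh z) ^ (n+1)) * (1 / Real.cosh z)))
      = fun z => (fun z : ℝ => 1 / Real.cosh z) z
        + (fun z : ℝ => -((1 - Real.cosh z) ^ (n+1)) * (1 / Real.cosh z)) z from rfl, hadd2]
  have hmain : iteratedDeriv (2 * n)
      (fun z : ℝ => -((1 - Real.cosh z) ^ (n+1)) * (1 / Real.cosh z)) 0 = 0 := by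
    rw [my_leibniz ((pow_smooth (n+1)).neg) inv_cosh_smooth]
    apply Finset.sum_eq_zero
    intro i hi
    have hi' : i ≤ 2 * n := Nat.lt_succ_iff.mp (Finset.mem_range.mp hi)
    have : iteratedDeriv i (fun z : ℝ => -((1 - Real.cosh z) ^ (n+1))) 0 = 0 := by
      rw [iteratedDeriv_fun_neg, pow_deriv_zero (n+1) i (by omega), neg_zero]
    rw [this]; ring
  simp only [eulerNumber, hconst, hmain, add_zero]
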